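/- If \(\mathbf{v}_1,\dots,\mathbf{v}_{N_1} \in \mathbb{C}^M\) are i.i.d. with \(\mathbf{v}_n \sim \mathcal{CN}(\mathbf{0}, \sigma_v^2 \mathbf{I}_M)\), then \(\mathbb{E}[\max_{1\le n\le N_1} \|\mathbf{v}_n\|^2] = \sigma_v^2 G(N_1, M)\), where \(G(N_1,M) = \sum_{n=1}^{N_1} \binom{N_1}{n}(-1)^{n+1} c_n\) with \(c_n = \sum_{k_0+\cdots+k_{M-1}=n} \binom{n}{k_0,\dots,k_{M-1}} \left(\prod_{m=0}^{M-1}\frac{1}{(m!)^{k_m}}\right) \frac{(\sum_m m k_m)!}{n^{1+\sum_m m k_m}}\). -/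

import Mathlib

open MeasureTheory ProbabilityTheory Finset

noncomputable section

instance euclideanComplexMeasurableSpace {M : ℕ} :
    MeasurableSpace (EuclideanSpace ℂ (Fin M)) := WithLp.measurableSpace 2 _

instance euclideanComplexBorelSpace {M : ℕ} :
    BorelSpace (EuclideanSpace ℂ (Fin M)) := PiLp.borelSpace 2

instance euclideanComplexMeasureSpace {M : ℕ} :
    MeasureSpace (EuclideanSpace ℂ (Fin M)) := ⟨(Measure.pi fun _ : Fin M => (volume : Measure ℂ)).map (WithLp.toLp 2)⟩

/-- The circularly symmetric complex Gaussian distribution `CN(0, σ² I_M)` on `ℂ^M`,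
given by the density `v ↦ (π σ²)^{-M} exp(-‖v‖²/σ²)` w.r.t. Lebesgue measure. -/
def cscg (M : ℕ) (σ2 : ℝ) : Measure (EuclideanSpace ℂ (Fin M)) :=
  volume.withDensity fun v =>
    ENNReal.ofReal (((Real.pi * σ2) ^ M)⁻¹ * Real.exp (-‖v‖ ^ 2 / σ2))

/-- The coefficient `c_n` from the multinomial expansion. -/
def ccoef (M n : ℕ) : ℝ :=
  ∑ k ∈ Finset.Nat.antidiagonalTuple M n,
    (Nat.multinomial Finset.univ k : ℝ) *
      (∏ m : Fin M, (1 : ℝ) / ((m : ℕ).factorial ^ k m : ℕ)) *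
      (((∑ m : Fin M, (m : ℕ) * k m).factorial : ℝ) /
        (n : ℝ) ^ (1 + ∑ m : Fin M, (m : ℕ) * k m))

/-- `G(N₁, M) = ∑_{n=1}^{N₁} C(N₁,n) (-1)^{n+1} c_n`. -/
def Gfun (N1 M : ℕ) : ℝ :=
  ∑ n ∈ Finset.Icc 1 N1, (N1.choose n : ℝ) * (-1 : ℝ) ^ (n + 1) * ccoef M n

instance euclideanComplexHaar {M : ℕ} :
    Measure.IsAddHaarMeasure (volume : Measure (EuclideanSpace ℂ (Fin M))) :=
  (PiLp.continuousLinearEquiv 2 ℝ (fun _ : Fin M => ℂ)).symm.isAddHaarMeasure_map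
    (Measure.pi fun _ : Fin M => (volume : Measure ℂ))

lemma vol_closedBall {M : ℕ} (hM : 1 ≤ M) (r : ℝ) :
    (volume : Measure (EuclideanSpace ℂ (Fin M))) (Metric.closedBall 0 r) =
      (ENNReal.ofReal r) ^ (2 * M) * ENNReal.ofReal (Real.pi ^ M / M.factorial) := by
  have : Nonempty (Fin M) := ⟨⟨0, hM⟩⟩
  have h := Complex.volume_sum_rpow_le (Fin M) (p := 2) one_le_two r
  have hset : WithLp.toLp 2 ⁻¹' Metric.closedBall (0 : EuclideanSpace ℂ (Fin M)) r =
      {x : Fin M → ℂ | (∑ i, ‖x i‖ ^ (2:ℝ)) ^ ((1:ℝ) / 2) ≤ r} := by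
    ext x
    simp only [Set.mem_preimage, Metric.mem_closedBall, dist_zero_right, Set.mem_setOf_eq]
    rw [EuclideanSpace.norm_eq, Real.sqrt_eq_rpow]
    simp only [PiLp.toLp_apply]
    have h2 : ∀ i, ‖x i‖ ^ (2:ℝ) = ‖x i‖ ^ 2 := fun i => by
      rw [← Real.rpow_natCast ‖x i‖ 2]; norm_num
    rw [show (∑ i, ‖x i‖ ^ 2) = (∑ i, ‖x i‖ ^ (2:ℝ)) from
      Finset.sum_congr rfl fun i _ => (h2 i).symm]
  show (Measure.map (WithLp.toLp 2) (Measure.pi fun _ : Fin M => (volume : Measure ℂ)))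
    (Metric.closedBall 0 r) = _
  rw [Measure.map_apply (WithLp.measurable_toLp 2 _) Metric.isClosed_closedBall.measurableSet,
    hset]
  refine Eq.trans h ?_
  congr 1
  · simp [Fintype.card_fin]
  · congr 1
    rw [show (2:ℝ)/2 + 1 = 2 by norm_num, Real.Gamma_two,
      show 2 * ((Fintype.card (Fin M)) : ℝ) / 2 + 1 = (M:ℝ) + 1 by
        push_cast [Fintype.card_fin]; ring,
      Real.Gamma_nat_eq_factorial]
    simp

lemma finrank_ec {M : ℕ} : Module.finrank ℝ (EuclideanSpace ℂ (Fin M)) = 2 * M := by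
  have : Module.finrank ℝ (EuclideanSpace ℂ (Fin M)) = Module.finrank ℝ (Fin M → ℂ) :=
    (WithLp.linearEquiv 2 ℝ (Fin M → ℂ)).finrank_eq
  rw [this, Module.finrank_pi_fintype, Complex.finrank_real_complex]
  simp [Finset.sum_const, mul_comm]

lemma lintegral_fun_norm {M : ℕ} (hM : 1 ≤ M) (f : ℝ → ENNReal) (hf : Measurable f) :
    ∫⁻ v : EuclideanSpace ℂ (Fin M), f ‖v‖ =
      (volume (Metric.ball (0 : EuclideanSpace ℂ (Fin M)) 1)) * (2 * M) *
        ∫⁻ y in Set.Ioi (0:ℝ), ENNReal.ofReal (y ^ (2 * M - 1)) * f y := by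
  have : Nontrivial (EuclideanSpace ℂ (Fin M)) := by
    have : Nonempty (Fin M) := ⟨⟨0, hM⟩⟩
    exact inferInstance
  set μ : Measure (EuclideanSpace ℂ (Fin M)) := volume with hμ
  set E := EuclideanSpace ℂ (Fin M)
  calc
    ∫⁻ v : E, f ‖v‖ ∂μ = ∫⁻ v in {(0:E)}ᶜ, f ‖v‖ ∂μ := by
      rw [MeasureTheory.restrict_compl_singleton]
    _ = ∫⁻ x : ({(0:E)}ᶜ : Set E), f ‖(x : E)‖ ∂(μ.comap (↑)) := by
      rw [lintegral_subtype_comap (MeasurableSet.compl (measurableSet_singleton (0:E))) fun v => f ‖v‖]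
    _ = ∫⁻ p : Metric.sphere (0:E) 1 × Set.Ioi (0:ℝ), f p.2
          ∂(μ.toSphere.prod (Measure.volumeIoiPow (Module.finrank ℝ E - 1))) := by
      rw [← μ.measurePreserving_homeomorphUnitSphereProd.lintegral_comp
        (f := fun p : Metric.sphere (0:E) 1 × Set.Ioi (0:ℝ) => f p.2)
        (by exact hf.comp (measurable_subtype_coe.comp measurable_snd))]
      simp only [homeomorphUnitSphereProd_apply_snd_coe]
      rfl
    _ = μ.toSphere Set.univ *
        ∫⁻ y : Set.Ioi (0:ℝ), f y ∂(Measure.volumeIoiPow (Module.finrank ℝ E - 1)) := by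
      rw [lintegral_prod _
        (by exact (hf.comp (measurable_subtype_coe.comp measurable_snd)).aemeasurable)]
      simp [lintegral_const, mul_comm]
    _ = μ.toSphere Set.univ * ∫⁻ y in Set.Ioi (0:ℝ), ENNReal.ofReal (y ^ (2 * M - 1)) * f y := by
      congr 1
      rw [Measure.volumeIoiPow,
        lintegral_withDensity_eq_lintegral_mul _
          (by exact (measurable_subtype_coe.pow_const _).ennreal_ofReal)
          (by exact hf.comp measurable_subtype_coe)]
      rw [show (fun (y : Set.Ioi (0:ℝ)) => ((fun r : Set.Ioi (0:ℝ) =>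
              ENNReal.ofReal (r.1 ^ (Module.finrank ℝ E - 1))) * fun y : Set.Ioi (0:ℝ) => f y.1) y)
            = fun y : Set.Ioi (0:ℝ) =>
              (fun a : ℝ => ENNReal.ofReal (a ^ (Module.finrank ℝ E - 1)) * f a) y.1 from rfl,
        lintegral_subtype_comap measurableSet_Ioi
          (fun a : ℝ => ENNReal.ofReal (a ^ (Module.finrank ℝ E - 1)) * f a)]
      rw [show Module.finrank ℝ E - 1 = 2 * M - 1 by rw [finrank_ec]]
    _ = _ := by
      rw [Measure.toSphere_apply_univ, finrank_ec]
      push_cast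
      ring

def erlS (M : ℕ) (τ : ℝ) : ℝ := ∑ m ∈ Finset.range M, τ ^ m / m.factorial

def erlF (M : ℕ) (τ : ℝ) : ℝ := 1 - Real.exp (-τ) * erlS M τ

lemma erlS_zero_left (τ : ℝ) : erlS 0 τ = 0 := by simp [erlS]

lemma erlS_succ (M : ℕ) (τ : ℝ) : erlS (M+1) τ = erlS M τ + τ^M / M.factorial := by
  simp [erlS, Finset.sum_range_succ]

lemma hasDerivAt_erlS (M : ℕ) (τ : ℝ) : HasDerivAt (erlS (M+1)) (erlS M τ) τ := by
  induction M with
  | zero =>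
      have : erlS 1 = fun _ : ℝ => 1 := by
        funext x; simp [erlS]
      rw [this, erlS_zero_left]
      exact hasDerivAt_const τ 1
  | succ K ih =>
      have h1 : HasDerivAt (fun τ : ℝ => τ ^ (K+1) / (K+1).factorial)
          (τ ^ K / K.factorial) τ := by
        have := (hasDerivAt_pow (K+1) τ).div_const ((K+1).factorial : ℝ)
        refine this.congr_deriv ?_
        rw [Nat.factorial_succ, Nat.add_sub_cancel]
        have hK1 : ((K:ℝ)+1) ≠ 0 := by positivity
        push_cast
        field_simp
      have := ih.add h1
      have heq : (erlS (K+1) + fun τ : ℝ => τ^(K+1) / ((K+1).factorial : ℝ)) = erlS (K+2) := by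
        funext x; rw [erlS_succ (K+1) x]; rfl
      rw [heq] at this
      rw [erlS_succ K τ]
      exact this

lemma hasDerivAt_erlF (M : ℕ) (τ : ℝ) :
    HasDerivAt (erlF (M+1)) (Real.exp (-τ) * τ ^ M / M.factorial) τ := by
  have hexp : HasDerivAt (fun τ : ℝ => Real.exp (-τ)) (-Real.exp (-τ)) τ := by
    exact ((Real.hasDerivAt_exp (-τ)).comp τ (hasDerivAt_neg τ)).congr_deriv (by ring)
  have hmul := hexp.mul (hasDerivAt_erlS M τ)
  have h := (hasDerivAt_const τ (1:ℝ)).sub hmul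
  have heq : erlF (M+1) = fun x => 1 - Real.exp (-x) * erlS (M+1) x := rfl
  rw [heq]
  refine h.congr_deriv ?_
  rw [erlS_succ]
  ring

lemma erlF_zero (M : ℕ) (hM : 1 ≤ M) : erlF M 0 = 0 := by
  have h1 : erlS M 0 = 1 := by
    rw [erlS, Finset.sum_eq_single_of_mem 0 (Finset.mem_range.mpr hM)]
    · simp
    · intro m _ hm
      simp [zero_pow hm]
  simp [erlF, h1]

def Phi (M : ℕ) (σ2 : ℝ) (y : ℝ) : ℝ :=
  ((M-1).factorial : ℝ) * σ2 ^ M / 2 * erlF M (y^2/σ2)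

lemma hasDerivAt_Phi (M : ℕ) (hM : 1 ≤ M) {σ2 : ℝ} (hσ : 0 < σ2) (y : ℝ) :
    HasDerivAt (Phi M σ2) (y ^ (2*M-1) * Real.exp (-y^2/σ2)) y := by
  obtain ⟨K, rfl⟩ := Nat.exists_eq_add_of_le hM
  have hu : HasDerivAt (fun y : ℝ => y^2/σ2) (2*y/σ2) y := by
    simpa using (hasDerivAt_pow 2 y).div_const σ2
  have := ((hasDerivAt_erlF K (y^2/σ2)).comp y hu).const_mul
      (((1+K-1).factorial : ℝ) * σ2 ^ (1+K) / 2)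
  have heq : Phi (1+K) σ2 = fun y : ℝ =>
      (((1+K-1).factorial : ℝ) * σ2 ^ (1+K) / 2) * erlF (K+1) (y^2/σ2) := by
    funext x; rw [Phi, show 1+K = K+1 by ring]
  rw [heq]
  refine this.congr_deriv ?_
  rw [show 1+K-1 = K by omega, show 2*(1+K)-1 = 2*K+1 by omega]
  have hK : ((K.factorial : ℝ)) ≠ 0 := Nat.cast_ne_zero.mpr K.factorial_ne_zero
  have h2 : (y^2/σ2)^K = y^(2*K)/σ2^K := by
    rw [div_pow, ← pow_mul]
  rw [h2]
  field_simp
  ring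

open Real in
lemma cscg_cdf {M : ℕ} (hM : 1 ≤ M) {σ2 : ℝ} (hσ : 0 < σ2) {t : ℝ} (ht : 0 ≤ t) :
    cscg M σ2 {v : EuclideanSpace ℂ (Fin M) | ‖v‖ ^ 2 ≤ t} =
      ENNReal.ofReal (erlF M (t / σ2)) := by
  have : Nontrivial (EuclideanSpace ℂ (Fin M)) := by
    have : Nonempty (Fin M) := ⟨⟨0, hM⟩⟩
    exact inferInstance
  set c : ℝ := ((Real.pi * σ2) ^ M)⁻¹ with hc
  have hc0 : 0 < c := by positivity
  set st : ℝ := Real.sqrt t with hst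
  have hst0 : 0 ≤ st := Real.sqrt_nonneg t
  have hset : {v : EuclideanSpace ℂ (Fin M) | ‖v‖ ^ 2 ≤ t} =
      (fun v : EuclideanSpace ℂ (Fin M) => ‖v‖) ⁻¹' (Set.Iic st) := by
    ext v
    simp only [Set.mem_setOf_eq, Set.mem_preimage, Set.mem_Iic]
    rw [hst]
    exact (Real.le_sqrt (norm_nonneg v) ht).symm
  have hsmeas : MeasurableSet {v : EuclideanSpace ℂ (Fin M) | ‖v‖ ^ 2 ≤ t} := by
    rw [hset]; exact measurable_norm measurableSet_Iic
  set D : ℝ → ENNReal := fun y => ENNReal.ofReal (c * Real.exp (-y^2/σ2)) with hD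
  have hDmeas : Measurable D := by
    apply Measurable.ennreal_ofReal
    fun_prop
  set f : ℝ → ENNReal := (Set.Iic st).indicator D with hf
  have hfmeas : Measurable f := hDmeas.indicator measurableSet_Iic
  have step1 : cscg M σ2 {v : EuclideanSpace ℂ (Fin M) | ‖v‖ ^ 2 ≤ t} =
      ∫⁻ v : EuclideanSpace ℂ (Fin M), f ‖v‖ := by
    rw [cscg, withDensity_apply _ hsmeas, ← lintegral_indicator hsmeas]
    congr 1
    funext v
    rw [hset, hf]
    exact Set.indicator_comp_right (fun v : EuclideanSpace ℂ (Fin M) => ‖v‖) (s := Set.Iic st)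
      (g := D) (x := v)
  rw [step1, lintegral_fun_norm hM f hfmeas]
  have hball : (volume : Measure (EuclideanSpace ℂ (Fin M))) (Metric.ball 0 1) =
      ENNReal.ofReal (Real.pi ^ M / M.factorial) := by
    rw [← Measure.addHaar_closedBall_eq_addHaar_ball, vol_closedBall hM 1]
    simp
  have hMfac : ((M.factorial : ℝ)) = (M : ℝ) * ((M-1).factorial : ℝ) := by
    rw [← Nat.cast_mul, Nat.mul_factorial_pred (by omega)]
  -- compute the radial integral
  set C : ℝ := ((M-1).factorial : ℝ) * σ2 ^ M / 2 with hC
  have hC0 : 0 < C := by positivity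
  have hcont : Continuous (fun y : ℝ => y ^ (2*M-1) * (c * Real.exp (-y^2/σ2))) := by
    fun_prop
  have hrad : ∫⁻ y in Set.Ioi (0:ℝ), ENNReal.ofReal (y ^ (2*M-1)) * f y =
      ENNReal.ofReal (c * (C * erlF M (t / σ2))) := by
    have e1 : ∀ y : ℝ, ENNReal.ofReal (y ^ (2*M-1)) * f y =
        (Set.Iic st).indicator (fun y => ENNReal.ofReal (y ^ (2*M-1)) * D y) y := by
      intro y
      rw [hf, Set.indicator_mul_right]
    simp_rw [e1]
    rw [lintegral_indicator measurableSet_Iic, Measure.restrict_restrict measurableSet_Iic,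
      show Set.Iic st ∩ Set.Ioi 0 = Set.Ioc 0 st by rw [Set.inter_comm, Set.Ioi_inter_Iic]]
    have e2 : ∫⁻ y in Set.Ioc (0:ℝ) st, ENNReal.ofReal (y ^ (2*M-1)) * D y =
        ∫⁻ y in Set.Ioc (0:ℝ) st, ENNReal.ofReal (y ^ (2*M-1) * (c * Real.exp (-y^2/σ2))) := by
      refine setLIntegral_congr_fun measurableSet_Ioc ?_
      intro y hy
      beta_reduce
      rw [← ENNReal.ofReal_mul (pow_nonneg hy.1.le _)]
    rw [e2, ← ofReal_integral_eq_lintegral_ofReal]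
    · congr 1
      rw [← intervalIntegral.integral_of_le hst0]
      have hftc := intervalIntegral.integral_eq_sub_of_hasDerivAt
        (f := Phi M σ2) (f' := fun y => y ^ (2*M-1) * Real.exp (-y^2/σ2)) (a := 0) (b := st)
        (fun y _ => hasDerivAt_Phi M hM hσ y)
        (((by fun_prop : Continuous fun y : ℝ =>
          y ^ (2*M-1) * Real.exp (-y^2/σ2))).intervalIntegrable 0 st)
      have hPhi0 : Phi M σ2 0 = 0 := by
        simp [Phi, erlF_zero M hM]
      have hPhist : Phi M σ2 st = C * erlF M (t / σ2) := by
        rw [Phi, hst, Real.sq_sqrt ht, hC]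
      calc ∫ y in (0:ℝ)..st, y ^ (2*M-1) * (c * Real.exp (-y^2/σ2))
          = c * ∫ y in (0:ℝ)..st, y ^ (2*M-1) * Real.exp (-y^2/σ2) := by
            rw [← intervalIntegral.integral_const_mul]
            congr 1; funext y; ring
        _ = c * (C * erlF M (t / σ2)) := by
            rw [hftc, hPhi0, hPhist, sub_zero]
    · exact hcont.integrableOn_Ioc
    · filter_upwards [ae_restrict_mem measurableSet_Ioc] with y hy
      exact mul_nonneg (pow_nonneg hy.1.le _) (by positivity)
  rw [hball, hrad]
  rw [show ((2:ENNReal) * (M:ℕ)) = ENNReal.ofReal ((2*M : ℕ) : ℝ) by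
    rw [ENNReal.ofReal_natCast]; push_cast; ring]
  rw [← ENNReal.ofReal_mul (by positivity), ← ENNReal.ofReal_mul (by positivity)]
  congr 1
  rw [hc, hC, hMfac, mul_pow]
  have h1 : (Real.pi : ℝ) ^ M ≠ 0 := by positivity
  have h2 : (σ2 : ℝ) ^ M ≠ 0 := by positivity
  have h3 : ((M-1).factorial : ℝ) ≠ 0 := Nat.cast_ne_zero.mpr (Nat.factorial_ne_zero _)
  have h4 : (M:ℝ) ≠ 0 := by
    simp only [ne_eq, Nat.cast_eq_zero]; omega
  push_cast
  field_simp

lemma erlS_nonneg {M : ℕ} {τ : ℝ} (hτ : 0 ≤ τ) : 0 ≤ erlS M τ := by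
  rw [erlS]
  positivity

lemma exp_mul_erlS_le_one {M : ℕ} {τ : ℝ} (hτ : 0 ≤ τ) : Real.exp (-τ) * erlS M τ ≤ 1 := by
  have h1 : erlS M τ ≤ Real.exp τ := Real.sum_le_exp_of_nonneg hτ M
  calc Real.exp (-τ) * erlS M τ ≤ Real.exp (-τ) * Real.exp τ := by
        exact mul_le_mul_of_nonneg_left h1 (Real.exp_nonneg _)
    _ = 1 := by rw [← Real.exp_add]; simp

lemma erlF_nonneg {M : ℕ} {τ : ℝ} (hτ : 0 ≤ τ) : 0 ≤ erlF M τ := by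
  have := exp_mul_erlS_le_one (M := M) hτ
  rw [erlF]; linarith

lemma erlF_le_one {M : ℕ} {τ : ℝ} (hτ : 0 ≤ τ) : erlF M τ ≤ 1 := by
  have h1 : 0 ≤ Real.exp (-τ) * erlS M τ :=
    mul_nonneg (Real.exp_nonneg _) (erlS_nonneg hτ)
  rw [erlF]; linarith

lemma expand_pow (M N : ℕ) (τ : ℝ) : 1 - erlF M τ ^ N =
    ∑ n ∈ Finset.Icc 1 N, (N.choose n : ℝ) * (-1:ℝ)^(n+1) * (Real.exp (-τ) * erlS M τ)^n := by
  set E : ℝ := Real.exp (-τ) * erlS M τ with hE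
  have h1 : erlF M τ = 1 - E := rfl
  have hr : Finset.range (N+1) = insert 0 (Finset.Icc 1 N) := by
    ext m
    simp only [Finset.mem_range, Finset.mem_insert, Finset.mem_Icc]
    omega
  have h2 : (1 - E)^N = ∑ k ∈ Finset.range (N+1), (-E)^k * 1^(N-k) * (N.choose k) := by
    rw [show (1:ℝ) - E = -E + 1 by ring, add_pow]
  rw [h1, h2, hr, Finset.sum_insert (by simp)]
  simp only [pow_zero, one_pow, one_mul, mul_one, Nat.choose_zero_right, Nat.cast_one]
  rw [show ∀ S : ℝ, 1 - (1 + S) = -S from fun S => by ring]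
  rw [← Finset.sum_neg_distrib]
  refine Finset.sum_congr rfl fun n hn => ?_
  rw [neg_pow]
  ring

lemma integrableOn_pow_exp (S : ℕ) {b : ℝ} (hb : 0 < b) :
    MeasureTheory.IntegrableOn (fun τ : ℝ => τ ^ S * Real.exp (-(b * τ))) (Set.Ioi 0) := by
  have h := integrableOn_rpow_mul_exp_neg_mul_rpow (s := (S:ℝ)) (p := 1)
    (lt_of_lt_of_le neg_one_lt_zero (Nat.cast_nonneg S)) one_pos hb
  have : (fun τ : ℝ => τ ^ (S:ℝ) * Real.exp (-b * τ ^ (1:ℝ))) =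
      (fun τ : ℝ => τ ^ S * Real.exp (-(b * τ))) := by
    funext τ
    rw [Real.rpow_natCast, Real.rpow_one, neg_mul]
  rwa [this] at h

lemma integral_pow_exp (S : ℕ) {b : ℝ} (hb : 0 < b) :
    ∫ τ in Set.Ioi (0:ℝ), τ ^ S * Real.exp (-(b * τ)) = (S.factorial : ℝ) / b ^ (S+1) := by
  have h := Real.integral_rpow_mul_exp_neg_mul_Ioi (a := (S:ℝ)+1) (r := b) (by positivity) hb
  have h2 : (fun τ : ℝ => τ ^ ((S:ℝ)+1-1) * Real.exp (-(b * τ))) =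
      (fun τ : ℝ => τ ^ S * Real.exp (-(b * τ))) := by
    funext τ
    rw [add_sub_cancel_right, Real.rpow_natCast]
  rw [h2] at h
  rw [h, Real.Gamma_nat_eq_factorial,
    show ((S:ℝ)+1) = ((S+1:ℕ):ℝ) by push_cast; ring, Real.rpow_natCast]
  rw [one_div, inv_pow]
  field_simp

lemma Epow_eq (M n : ℕ) (τ : ℝ) :
    (Real.exp (-τ) * erlS M τ)^n =
      ∑ k ∈ Finset.Nat.antidiagonalTuple M n,
        (Nat.multinomial Finset.univ k : ℝ) *
          (∏ m : Fin M, (1 : ℝ) / ((m : ℕ).factorial ^ k m : ℕ)) *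
          (τ ^ (∑ m : Fin M, (m : ℕ) * k m) * Real.exp (-((n:ℝ) * τ))) := by
  have hAT : Finset.Nat.antidiagonalTuple M n = Finset.piAntidiag Finset.univ n := by
    ext k
    simp [Finset.Nat.mem_antidiagonalTuple, Finset.mem_piAntidiag]
  have hS : erlS M τ = ∑ m : Fin M, τ ^ (m:ℕ) / ((m:ℕ).factorial : ℝ) := by
    rw [erlS, Finset.sum_range]
  have hexp : Real.exp (-τ) ^ n = Real.exp (-((n:ℝ) * τ)) := by
    rw [← Real.exp_nat_mul]
    ring_nf
  rw [mul_pow, hS, Finset.sum_pow_eq_sum_piAntidiag, ← hAT, Finset.mul_sum]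
  refine Finset.sum_congr rfl fun k hk => ?_
  have hPP : (∏ m : Fin M, (τ ^ (m:ℕ) / ((m:ℕ).factorial : ℝ)) ^ (k m))
      = (∏ m : Fin M, (1:ℝ) / ((m:ℕ).factorial ^ k m : ℕ)) *
          τ ^ (∑ m : Fin M, (m:ℕ) * k m) := by
    rw [← Finset.prod_pow_eq_pow_sum, ← Finset.prod_mul_distrib]
    refine Finset.prod_congr rfl fun m _ => ?_
    rw [div_pow, ← pow_mul]
    push_cast
    field_simp
  rw [hPP, hexp]
  ring

lemma integral_En (M n : ℕ) (hn : 1 ≤ n) :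
    ∫ τ in Set.Ioi (0:ℝ), (Real.exp (-τ) * erlS M τ)^n = ccoef M n := by
  have hb : (0:ℝ) < n := by exact_mod_cast hn
  simp_rw [Epow_eq M n]
  rw [MeasureTheory.integral_finset_sum _
    (fun k _ => ((integrableOn_pow_exp _ hb).const_mul _))]
  rw [ccoef]
  refine Finset.sum_congr rfl fun k hk => ?_
  rw [integral_const_mul, integral_pow_exp _ hb, add_comm 1]

lemma integrableOn_En (M n : ℕ) (hn : 1 ≤ n) :
    MeasureTheory.IntegrableOn (fun τ : ℝ => (Real.exp (-τ) * erlS M τ)^n) (Set.Ioi 0) := by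
  have hb : (0:ℝ) < n := by exact_mod_cast hn
  rw [show (fun τ : ℝ => (Real.exp (-τ) * erlS M τ)^n) = fun τ => ∑ k ∈
      Finset.Nat.antidiagonalTuple M n,
        (Nat.multinomial Finset.univ k : ℝ) *
          (∏ m : Fin M, (1 : ℝ) / ((m : ℕ).factorial ^ k m : ℕ)) *
          (τ ^ (∑ m : Fin M, (m : ℕ) * k m) * Real.exp (-((n:ℝ) * τ)))
    from funext (Epow_eq M n)]
  exact MeasureTheory.integrable_finset_sum _
    (fun k _ => ((integrableOn_pow_exp _ hb).const_mul _))

lemma integrableOn_oneSub (M N : ℕ) :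
    MeasureTheory.IntegrableOn (fun τ : ℝ => 1 - erlF M τ ^ N) (Set.Ioi 0) := by
  rw [show (fun τ : ℝ => 1 - erlF M τ ^ N) = fun τ => ∑ n ∈ Finset.Icc 1 N,
      (N.choose n : ℝ) * (-1:ℝ)^(n+1) * (Real.exp (-τ) * erlS M τ)^n
    from funext (expand_pow M N)]
  exact MeasureTheory.integrable_finset_sum _
    (fun n hn => ((integrableOn_En M n (Finset.mem_Icc.mp hn).1).const_mul _))

lemma integral_oneSub (M N : ℕ) :
    ∫ τ in Set.Ioi (0:ℝ), (1 - erlF M τ ^ N) = Gfun N M := by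
  simp_rw [expand_pow M N]
  rw [MeasureTheory.integral_finset_sum _
    (fun n hn => ((integrableOn_En M n (Finset.mem_Icc.mp hn).1).const_mul _))]
  rw [Gfun]
  refine Finset.sum_congr rfl fun n hn => ?_
  rw [integral_const_mul, integral_En M n (Finset.mem_Icc.mp hn).1]

lemma integral_g {σ2 : ℝ} (hσ : 0 < σ2) (M N : ℕ) :
    ∫ t in Set.Ioi (0:ℝ), (1 - erlF M (t/σ2) ^ N) = σ2 * Gfun N M := by
  have h := integral_comp_mul_right_Ioi (fun τ => 1 - erlF M τ ^ N) 0 (inv_pos.mpr hσ)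
  simp only [zero_mul, smul_eq_mul, inv_inv] at h
  simp_rw [div_eq_mul_inv]
  rw [h, integral_oneSub]

lemma integrableOn_g {σ2 : ℝ} (hσ : 0 < σ2) (M N : ℕ) :
    MeasureTheory.IntegrableOn (fun t : ℝ => 1 - erlF M (t/σ2) ^ N) (Set.Ioi 0) := by
  simp_rw [div_eq_mul_inv]
  have h := (integrableOn_Ioi_comp_mul_right_iff (fun τ => 1 - erlF M τ ^ N) 0
    (inv_pos.mpr hσ)).mpr
  simp only [zero_mul] at h
  exact h (integrableOn_oneSub M N)

/-- If `v 1, …, v N₁` are i.i.d. `CN(0, σ² I_M)` random vectors, then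
`E[max_n ‖v n‖²] = σ² G(N₁, M)`. -/
theorem stmt5 {Ω : Type*} [MeasureSpace Ω] [IsProbabilityMeasure (ℙ : Measure Ω)]
    (M N1 : ℕ) [NeZero N1] (hM : 1 ≤ M) (σ2 : ℝ) (hσ : 0 < σ2)
    (v : Fin N1 → Ω → EuclideanSpace ℂ (Fin M))
    (hmeas : ∀ n, Measurable (v n))
    (hindep : iIndepFun v ℙ)
    (hlaw : ∀ n, Measure.map (v n) ℙ = cscg M σ2) :
    (∫ ω, Finset.univ.sup' Finset.univ_nonempty (fun n => ‖v n ω‖ ^ 2)) =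
      σ2 * Gfun N1 M := by
  set X : Ω → ℝ := fun ω => Finset.univ.sup' Finset.univ_nonempty (fun n => ‖v n ω‖ ^ 2) with hX
  have hXmeas : Measurable X := by
    have : ∀ n : Fin N1, Measurable (fun ω => ‖v n ω‖ ^ 2) :=
      fun n => ((hmeas n).norm).pow_const 2
    have h := Finset.measurable_sup' (Finset.univ_nonempty (α := Fin N1))
      (fun n _ => this n)
    have he : (Finset.univ.sup' Finset.univ_nonempty fun n (ω : Ω) => ‖v n ω‖ ^ 2) = X := by
      funext ω
      rw [hX, Finset.sup'_apply]
    rwa [he] at h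
  have hXnn : ∀ ω, 0 ≤ X ω := by
    intro ω
    refine le_trans (sq_nonneg ‖v ⟨0, Nat.pos_of_ne_zero (NeZero.ne N1)⟩ ω‖) ?_
    exact Finset.le_sup' (fun n => ‖v n ω‖ ^ 2) (Finset.mem_univ _)
  -- the tail probability
  have htail : ∀ t : ℝ, 0 ≤ t → ℙ {ω | t < X ω} =
      ENNReal.ofReal (1 - erlF M (t/σ2) ^ N1) := by
    intro t ht
    have hA : MeasurableSet {x : EuclideanSpace ℂ (Fin M) | ‖x‖ ^ 2 ≤ t} :=
      measurableSet_le ((measurable_norm).pow_const 2) measurable_const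
    have hsets : {ω | X ω ≤ t} = ⋂ n, v n ⁻¹' {x : EuclideanSpace ℂ (Fin M) | ‖x‖ ^ 2 ≤ t} := by
      ext ω
      simp only [Set.mem_setOf_eq, Set.mem_iInter, Set.mem_preimage, hX,
        Finset.sup'_le_iff, Finset.mem_univ, forall_true_left]
    have hprod : ℙ {ω | X ω ≤ t} = ENNReal.ofReal (erlF M (t/σ2)) ^ N1 := by
      rw [hsets, hindep.meas_iInter (fun n => ⟨_, hA, rfl⟩)]
      have hone : ∀ n : Fin N1, ℙ (v n ⁻¹' {x : EuclideanSpace ℂ (Fin M) | ‖x‖ ^ 2 ≤ t}) =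
          ENNReal.ofReal (erlF M (t/σ2)) := by
        intro n
        rw [← Measure.map_apply (hmeas n) hA, hlaw n, cscg_cdf hM hσ ht]
      simp_rw [hone]
      rw [Finset.prod_const, Finset.card_univ, Fintype.card_fin]
    have hcompl : {ω | t < X ω} = {ω | X ω ≤ t}ᶜ := by
      ext ω; simp [not_le]
    have hms : MeasurableSet {ω | X ω ≤ t} := by
      rw [hsets]
      exact MeasurableSet.iInter fun n => (hmeas n) hA
    rw [hcompl, measure_compl hms (measure_ne_top _ _), hprod, measure_univ,
      ENNReal.ofReal_sub _ (pow_nonneg (erlF_nonneg (div_nonneg ht hσ.le)) _),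
      ENNReal.ofReal_one, ENNReal.ofReal_pow (erlF_nonneg (div_nonneg ht hσ.le))]
  -- layer cake
  have hlc : ∫⁻ ω, ENNReal.ofReal (X ω) = ∫⁻ t in Set.Ioi (0:ℝ), ℙ {ω | t < X ω} :=
    lintegral_eq_lintegral_meas_lt ℙ (Filter.Eventually.of_forall hXnn) hXmeas.aemeasurable
  have hg : ∫⁻ t in Set.Ioi (0:ℝ), ℙ {ω | t < X ω} =
      ENNReal.ofReal (∫ t in Set.Ioi (0:ℝ), (1 - erlF M (t/σ2) ^ N1)) := by
    have hnn : 0 ≤ᵐ[Measure.restrict ℙ (Set.Ioi 0)] fun t : ℝ => 1 - erlF M (t/σ2) ^ N1 := by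
      filter_upwards [ae_restrict_mem measurableSet_Ioi] with t ht
      have ht' : (0:ℝ) ≤ t / σ2 := div_nonneg (le_of_lt ht) hσ.le
      have h1 : erlF M (t/σ2) ^ N1 ≤ 1 := pow_le_one₀ (erlF_nonneg ht') (erlF_le_one ht')
      simp only [Pi.zero_apply]
      linarith
    rw [MeasureTheory.ofReal_integral_eq_lintegral_ofReal (integrableOn_g hσ M N1) hnn]
    refine setLIntegral_congr_fun measurableSet_Ioi ?_
    intro t ht
    exact htail t (le_of_lt ht)
  have hfin : ∫ ω, X ω = (∫⁻ ω, ENNReal.ofReal (X ω)).toReal := by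
    rw [MeasureTheory.integral_eq_lintegral_of_nonneg_ae (Filter.Eventually.of_forall hXnn)
      hXmeas.aestronglyMeasurable]
  have h0 : 0 ≤ ∫ t in Set.Ioi (0:ℝ), (1 - erlF M (t/σ2) ^ N1) := by
    refine MeasureTheory.setIntegral_nonneg measurableSet_Ioi fun t ht => ?_
    have ht' : (0:ℝ) ≤ t / σ2 := div_nonneg (le_of_lt (Set.mem_Ioi.mp ht)) hσ.le
    have h1 : erlF M (t/σ2) ^ N1 ≤ 1 := pow_le_one₀ (erlF_nonneg ht') (erlF_le_one ht')
    linarith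
  rw [hfin, hlc, hg, ENNReal.toReal_ofReal h0, integral_g hσ M N1]

end
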